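/- With e₁ = u, e₂ = (−cos φ·u + Su − cos φ·S²u)/√(1−2cos²φ), e₃ = S²u as above, the associated form satisfies g̃(e₁,e₁) = g̃(e₃,e₃) = 2cos φ, g̃(e₂,e₂) = −2cos φ, g̃(e₁,e₂) = g̃(e₂,e₃) = √(1−2cos²φ), g̃(e₁,e₃) = 0. Hence for v = x e₁ + y e₂ + z e₃: g̃(v,v) = 2cos φ(x²−y²+z²) + 2√(1−2cos²φ)(xy+yz). -/

import Mathlib

theorem sphere_equation_alpha1 {V : Type*} [AddCommGroup V] [Module ℝ V]
    (g : V →ₗ[ℝ] V →ₗ[ℝ] ℝ) (S : V →ₗ[ℝ] V)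
    (hsym : ∀ u v : V, g u v = g v u)
    (hpos : ∀ v : V, v ≠ 0 → 0 < g v v)
    (hS4 : ∀ v : V, S (S (S (S v))) = -v)
    (hcomp : ∀ u v : V, g (S u) (S v) = g u v)
    (gt : V → V → ℝ) (hgt : ∀ u v : V, gt u v = g u (S v) + g (S u) v)
    (u : V) (hu : g u u = 1)
    (c : ℝ) (hc : c = g u (S u)) (hc2 : 0 < 1 - 2 * c ^ 2)
    (e₁ e₂ e₃ : V)
    (he₁ : e₁ = u)
    (he₂ : e₂ = (Real.sqrt (1 - 2 * c ^ 2))⁻¹ • ((-c) • u + S u + (-c) • S (S u)))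
    (he₃ : e₃ = S (S u)) :
    (gt e₁ e₁ = 2 * c ∧ gt e₃ e₃ = 2 * c ∧ gt e₂ e₂ = -(2 * c) ∧
     gt e₁ e₂ = Real.sqrt (1 - 2 * c ^ 2) ∧ gt e₂ e₃ = Real.sqrt (1 - 2 * c ^ 2) ∧
     gt e₁ e₃ = 0) ∧
    ∀ x y z : ℝ, ∀ v : V, v = x • e₁ + y • e₂ + z • e₃ →
      gt v v = 2 * c * (x ^ 2 - y ^ 2 + z ^ 2)
        + 2 * Real.sqrt (1 - 2 * c ^ 2) * (x * y + y * z) := by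
  set r : ℝ := Real.sqrt (1 - 2 * c ^ 2) with hr
  have hr2 : r ^ 2 = 1 - 2 * c ^ 2 := Real.sq_sqrt hc2.le
  have hrpos : 0 < r := Real.sqrt_pos.2 hc2
  have hrne : r ≠ 0 := hrpos.ne'
  have h01 : g u (S u) = c := hc.symm
  have h02 : g u (S (S u)) = 0 := by
    have h1 : g (S (S u)) (S (S (S (S u)))) = g u (S (S u)) := by rw [hcomp, hcomp]
    rw [hS4 u, map_neg] at h1
    have h2 : g (S (S u)) u = g u (S (S u)) := hsym _ _
    linarith
  have h03 : g u (S (S (S u))) = -c := by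
    have h1 : g (S u) (S (S (S (S u)))) = g u (S (S (S u))) := by rw [hcomp]
    rw [hS4 u, map_neg] at h1
    have h2 : g (S u) u = g u (S u) := hsym _ _
    linarith
  have h11 : g (S u) (S u) = 1 := by rw [hcomp]; exact hu
  have h12 : g (S u) (S (S u)) = c := by rw [hcomp]; exact h01
  have h13 : g (S u) (S (S (S u))) = 0 := by rw [hcomp]; exact h02
  have h22 : g (S (S u)) (S (S u)) = 1 := by rw [hcomp]; exact h11
  have h23 : g (S (S u)) (S (S (S u))) = c := by rw [hcomp]; exact h12
  have h10 : g (S u) u = c := by rw [hsym]; exact h01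
  have h20 : g (S (S u)) u = 0 := by rw [hsym]; exact h02
  have h21 : g (S (S u)) (S u) = c := by rw [hsym]; exact h12
  have h30 : g (S (S (S u))) u = -c := by rw [hsym]; exact h03
  have h31 : g (S (S (S u))) (S u) = 0 := by rw [hsym]; exact h13
  have h32 : g (S (S (S u))) (S (S u)) = c := by rw [hsym]; exact h23
  have hA : gt e₁ e₁ = 2 * c := by
    rw [he₁, hgt, h01, h10]; ring
  have hB : gt e₃ e₃ = 2 * c := by
    rw [he₃, hgt, h23, h32]; ring
  have hF : gt e₁ e₃ = 0 := by
    rw [he₁, he₃, hgt, h03, h12]; ring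
  have hC : gt e₂ e₂ = -(2 * c) := by
    rw [he₂, hgt]
    simp only [map_add, map_smul, LinearMap.map_add, LinearMap.map_smul,
      LinearMap.add_apply, LinearMap.smul_apply, smul_eq_mul, hS4,
      h01, h02, h03, h10, h11, h12, h13, h20, h21, h22, h23, h30, h31, h32, hu]
    field_simp
    linear_combination (2 * c) * hr2
  have hD : gt e₁ e₂ = r := by
    rw [he₁, he₂, hgt]
    simp only [map_add, map_smul, LinearMap.map_add, LinearMap.map_smul,
      LinearMap.add_apply, LinearMap.smul_apply, smul_eq_mul, hS4,
      h01, h02, h03, h10, h11, h12, h13, h20, h21, h22, h23, h30, h31, h32, hu]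
    field_simp
    linear_combination -hr2
  have hE : gt e₂ e₃ = r := by
    rw [he₂, he₃, hgt]
    simp only [map_add, map_smul, LinearMap.map_add, LinearMap.map_smul,
      LinearMap.add_apply, LinearMap.smul_apply, smul_eq_mul, hS4,
      h01, h02, h03, h10, h11, h12, h13, h20, h21, h22, h23, h30, h31, h32, hu]
    field_simp
    linear_combination -hr2
  have hgts : ∀ a b : V, gt a b = gt b a := by
    intro a b
    rw [hgt, hgt, hsym a (S b), hsym (S a) b]
    ring
  refine ⟨⟨hA, hB, hC, hD, hE, hF⟩, ?_⟩
  intro x y z v hv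
  subst hv
  have hexp : gt (x • e₁ + y • e₂ + z • e₃) (x • e₁ + y • e₂ + z • e₃)
      = x ^ 2 * gt e₁ e₁ + y ^ 2 * gt e₂ e₂ + z ^ 2 * gt e₃ e₃
        + x * y * (gt e₁ e₂ + gt e₂ e₁) + x * z * (gt e₁ e₃ + gt e₃ e₁)
        + y * z * (gt e₂ e₃ + gt e₃ e₂) := by
    simp only [hgt, map_add, map_smul, LinearMap.map_add, LinearMap.map_smul,
      LinearMap.add_apply, LinearMap.smul_apply, smul_eq_mul]
    ring
  rw [hexp, hA, hB, hC, hD, hE, hF, hgts e₂ e₁, hgts e₃ e₁, hgts e₃ e₂, hD, hF, hE]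
  ring
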